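/- arXiv:1807.08970 — 2 statements merged into one kernel-verified Lean document; each statement's English description precedes it below -/
import Mathlib

section
/- Let n, k be positive integers and let y_1 < y_2 < ... < y_k be integers with 0 < y_1 and y_k ≤ 2n. Setting d_1 = y_1 and d_i = y_i − y_{i−1} for 2 ≤ i ≤ k, the number of trits used by the difference encoding satisfies ⌈log₂ d_1⌉ + ⌈log₂ d_2⌉ + ... + ⌈log₂ d_k⌉ + 2k ≤ k·log₂(n/k) + 4k. -/
open Finset Real

/-- The difference encoding of a set `{y 0 < y 1 < ⋯ < y (k-1)}` of integers in `(0, 2n]`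
uses at most `k·log₂(n/k) + 4k` trits:
`⌈log₂ d₁⌉ + ⋯ + ⌈log₂ d_k⌉ + 2k ≤ k·log₂(n/k) + 4k`, where `d` are successive differences. -/
theorem stmt_0 (n k : ℕ) (hn : 0 < n) (hk : 0 < k) (y : Fin k → ℤ)
    (hmono : StrictMono y)
    (hpos : 0 < y ⟨0, hk⟩)
    (hle : y ⟨k - 1, Nat.sub_lt hk one_pos⟩ ≤ 2 * n)
    (d : Fin k → ℤ)
    (hd : ∀ i : Fin k, d i = if h : i.val = 0 then y i
      else y i - y ⟨i.val - 1, lt_of_le_of_lt (Nat.sub_le _ _) i.isLt⟩) :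
    (∑ i : Fin k, (⌈Real.logb 2 (d i)⌉ : ℝ)) + 2 * k
      ≤ k * Real.logb 2 ((n : ℝ) / k) + 4 * k := by
  have hk' : (0:ℝ) < k := by exact_mod_cast hk
  have hn' : (0:ℝ) < n := by exact_mod_cast hn
  -- each difference is a positive integer
  have hd1 : ∀ i : Fin k, 1 ≤ d i := by
    intro i
    rw [hd i]
    split_ifs with h
    · have : i = ⟨0, hk⟩ := Fin.ext h
      rw [this]; omega
    · have hlt : (⟨i.val - 1, lt_of_le_of_lt (Nat.sub_le _ _) i.isLt⟩ : Fin k) < i := by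
        simp only [Fin.lt_def]; omega
      have := hmono hlt
      omega
  -- telescoping: the sum of differences is `y (k-1)`
  have hg : ∀ m : ℕ, m = 0 ∨ 0 < m → True := fun _ _ => trivial
  set g : ℕ → ℤ := fun m => if m = 0 then 0 else y ⟨min (m-1) (k-1), by omega⟩ with hgdef
  have hgs : ∀ (i : ℕ) (hi : i < k), g (i+1) = y ⟨i, hi⟩ := by
    intro i hi
    simp only [hgdef]
    rw [if_neg (by omega)]
    congr 1
    ext
    simp only
    omega
  have hdg : ∀ i : Fin k, d i = g (i.val + 1) - g i.val := by
    intro i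
    rw [hd i, hgs i.val i.isLt]
    split_ifs with h
    · have h0 : g i.val = 0 := by simp [hgdef, h]
      rw [h0, sub_zero, Fin.eta]
    · have h1 : g i.val = y ⟨i.val - 1, lt_of_le_of_lt (Nat.sub_le _ _) i.isLt⟩ := by
        have h2 := hgs (i.val - 1) (lt_of_le_of_lt (Nat.sub_le _ _) i.isLt)
        rw [← h2]; congr 1; omega
      rw [h1, Fin.eta]
  have hsum : ∑ i : Fin k, d i ≤ 2 * n := by
    calc ∑ i : Fin k, d i = ∑ i : Fin k, (g (i.val + 1) - g i.val) := by
          exact Finset.sum_congr rfl fun i _ => hdg i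
      _ = ∑ i ∈ Finset.range k, (g (i + 1) - g i) :=
          Fin.sum_univ_eq_sum_range (fun m => g (m+1) - g m) k
      _ = g k - g 0 := Finset.sum_range_sub g k
      _ = y ⟨k - 1, Nat.sub_lt hk one_pos⟩ := by
          have h0 : g 0 = 0 := by simp [hgdef]
          have h2 := hgs (k - 1) (Nat.sub_lt hk one_pos)
          rw [show k - 1 + 1 = k from by omega] at h2
          rw [h0, h2, sub_zero]
      _ ≤ 2 * n := hle
  -- move to the reals
  set r : Fin k → ℝ := fun i => ((d i : ℤ) : ℝ) with hrdef
  have hr1 : ∀ i, (1:ℝ) ≤ r i := fun i => by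
    show (1:ℝ) ≤ ((d i : ℤ) : ℝ)
    exact_mod_cast hd1 i
  have hrpos : ∀ i, (0:ℝ) < r i := fun i => lt_of_lt_of_le one_pos (hr1 i)
  set S : ℝ := ∑ i : Fin k, r i with hSdef
  have hSk : (k:ℝ) ≤ S := by
    calc (k:ℝ) = ∑ _i : Fin k, (1:ℝ) := by simp
      _ ≤ S := Finset.sum_le_sum fun i _ => hr1 i
  have hSpos : 0 < S := lt_of_lt_of_le hk' hSk
  have hS2n : S ≤ 2 * n := by
    have : ((∑ i : Fin k, d i : ℤ) : ℝ) ≤ ((2 * n : ℤ) : ℝ) := by exact_mod_cast hsum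
    simpa [hSdef, hrdef] using this
  -- Jensen's inequality
  have jensen : ∑ i : Fin k, Real.log (r i) ≤ k * Real.log (S / k) := by
    have h := (strictConcaveOn_log_Ioi.concaveOn).le_map_sum (t := Finset.univ)
      (w := fun _ : Fin k => 1 / (k:ℝ)) (p := r)
      (fun i _ => by positivity)
      (by simp [Finset.sum_const, Finset.card_univ]; field_simp)
      (fun i _ => Set.mem_Ioi.mpr (hrpos i))
    simp only [smul_eq_mul] at h
    rw [← Finset.mul_sum, ← Finset.mul_sum] at h
    have h2 : (1 / (k:ℝ)) * ∑ i : Fin k, r i = S / k := by rw [← hSdef]; ring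
    rw [h2] at h
    calc ∑ i : Fin k, Real.log (r i)
        = k * ((1 / (k:ℝ)) * ∑ i : Fin k, Real.log (r i)) := by field_simp
      _ ≤ k * Real.log (S / k) := by
          exact mul_le_mul_of_nonneg_left h (le_of_lt hk')
  -- bound each ceiling term
  have hceil : ∀ i : Fin k, (⌈Real.logb 2 (d i)⌉ : ℝ) ≤ Real.logb 2 (r i) + 1 := by
    intro i
    exact le_of_lt (Int.ceil_lt_add_one _)
  have hlog2 : (0:ℝ) < Real.log 2 := Real.log_pos one_lt_two
  have hsum_logb : ∑ i : Fin k, Real.logb 2 (r i) ≤ k * Real.logb 2 (S / k) := by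
    simp only [Real.logb, ← Finset.sum_div]
    rw [← mul_div_assoc]
    exact div_le_div_of_nonneg_right jensen hlog2.le
  have hmono2 : Real.logb 2 (S / k) ≤ Real.logb 2 (2 * n / k) := by
    rw [Real.logb_le_logb one_lt_two (by positivity) (by positivity)]
    gcongr
  have hsplit : Real.logb 2 (2 * (n:ℝ) / k) = 1 + Real.logb 2 ((n:ℝ) / k) := by
    rw [show (2 * (n:ℝ) / k) = 2 * ((n:ℝ)/k) by ring,
      Real.logb_mul two_ne_zero (by positivity), Real.logb_self_eq_one one_lt_two]
  calc (∑ i : Fin k, (⌈Real.logb 2 (d i)⌉ : ℝ)) + 2 * k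
      ≤ (∑ i : Fin k, (Real.logb 2 (r i) + 1)) + 2 * k := by
        gcongr with i _
        exact hceil i
    _ = (∑ i : Fin k, Real.logb 2 (r i)) + k + 2 * k := by
        rw [Finset.sum_add_distrib]; simp
    _ ≤ k * Real.logb 2 (S / k) + k + 2 * k := by linarith [hsum_logb]
    _ ≤ k * Real.logb 2 (2 * n / k) + k + 2 * k := by
        have := mul_le_mul_of_nonneg_left hmono2 (le_of_lt hk')
        linarith
    _ = k * (1 + Real.logb 2 ((n:ℝ) / k)) + k + 2 * k := by rw [hsplit]
    _ = k * Real.logb 2 ((n : ℝ) / k) + 4 * k := by ring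
end

section
/- For all integers r, n with 1 ≤ r ≤ n, the sum over l from 0 to ⌈log₂ r⌉ of the quantity 2^l · log₂(n/2^l) + 2^{l+2} is at most 4r·log₂(n/r) + 20r. -/
lemma aux_sum_lin (L : ℕ) :
    ∑ l ∈ Finset.range (L + 1), (2 : ℝ) ^ l * ((L : ℝ) - l)
      = 2 ^ (L + 1) - L - 2 := by
  induction L with
  | zero => simp
  | succ L ih =>
    have hg : ∑ l ∈ Finset.range (L + 1), (2 : ℝ) ^ l = 2 ^ (L + 1) - 1 := by
      rw [geom_sum_eq (by norm_num)]
      norm_num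
    rw [Finset.sum_range_succ]
    have hcongr : ∑ l ∈ Finset.range (L + 1), (2 : ℝ) ^ l * ((↑(L + 1) : ℝ) - l)
        = ∑ l ∈ Finset.range (L + 1), ((2 : ℝ) ^ l * ((L : ℝ) - l) + 2 ^ l) := by
      apply Finset.sum_congr rfl
      intro l _
      push_cast
      ring
    rw [hcongr, Finset.sum_add_distrib, ih, hg]
    push_cast
    ring

/-- For integers `1 ≤ r ≤ n`,
`∑_{l=0}^{⌈log₂ r⌉} (2^l·log₂(n/2^l) + 2^{l+2}) ≤ 4r·log₂(n/r) + 20r`,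
where `⌈log₂ r⌉ = Nat.clog 2 r` is the least `L` with `r ≤ 2^L`. -/
theorem stmt_3 (r n : ℕ) (hr : 1 ≤ r) (hrn : r ≤ n) :
    ∑ l ∈ Finset.range (Nat.clog 2 r + 1),
        ((2 : ℝ) ^ l * Real.logb 2 ((n : ℝ) / 2 ^ l) + 2 ^ (l + 2))
      ≤ 4 * r * Real.logb 2 ((n : ℝ) / r) + 20 * r := by
  set L := Nat.clog 2 r with hLdef
  have hr0 : (0 : ℝ) < r := by exact_mod_cast hr
  have hn0 : (0 : ℝ) < n := lt_of_lt_of_le hr0 (by exact_mod_cast hrn)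
  have hrL : (r : ℝ) ≤ 2 ^ L := by exact_mod_cast Nat.le_pow_clog one_lt_two r
  have hL2r : (2 : ℝ) ^ L ≤ 2 * r := by
    have : 2 ^ L ≤ 2 * r := by
      rcases eq_or_lt_of_le hr with h1 | h1
      · simp [hLdef, ← h1]
      · have h2 := Nat.pow_pred_clog_lt_self one_lt_two h1
        have hL1 : 1 ≤ L := Nat.clog_pos one_lt_two h1
        have h2' : 2 ^ (L - 1) < r := h2
        calc 2 ^ L = 2 * 2 ^ (L - 1) := by
              rw [← pow_succ']
              congr 1
              omega
          _ ≤ 2 * r := by omega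
    exact_mod_cast this
  have hA : (0 : ℝ) ≤ Real.logb 2 ((n : ℝ) / r) := by
    apply Real.logb_nonneg one_lt_two
    rw [le_div_iff₀ hr0]
    simpa using (by exact_mod_cast hrn : (r : ℝ) ≤ n)
  set A := Real.logb 2 ((n : ℝ) / r) with hAdef
  have key : ∀ l ∈ Finset.range (L + 1),
      (2 : ℝ) ^ l * Real.logb 2 ((n : ℝ) / 2 ^ l) + 2 ^ (l + 2)
        ≤ 2 ^ l * A + 2 ^ l * ((L : ℝ) - l) + 2 ^ (l + 2) := by
    intro l hl
    have hp : (0 : ℝ) < (2 : ℝ) ^ l := by positivity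
    have hsplit : Real.logb 2 ((n : ℝ) / 2 ^ l)
        = A + Real.logb 2 ((r : ℝ) / 2 ^ l) := by
      rw [hAdef, ← Real.logb_mul (by positivity) (by positivity)]
      congr 1
      field_simp
    have hlogr : Real.logb 2 ((r : ℝ) / 2 ^ l) ≤ (L : ℝ) - l := by
      rw [Real.logb_div hr0.ne' hp.ne']
      have h1 : Real.logb 2 ((2 : ℝ) ^ l) = l := by
        simp [Real.logb_pow]
      have h2 : Real.logb 2 (r : ℝ) ≤ L := by
        calc Real.logb 2 (r : ℝ) ≤ Real.logb 2 ((2 : ℝ) ^ L) :=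
              Real.logb_le_logb_of_le (by norm_num) hr0 hrL
          _ = L := by simp [Real.logb_pow]
      rw [h1]
      linarith
    have := mul_le_mul_of_nonneg_left hlogr hp.le
    rw [hsplit]
    nlinarith
  calc ∑ l ∈ Finset.range (L + 1),
        ((2 : ℝ) ^ l * Real.logb 2 ((n : ℝ) / 2 ^ l) + 2 ^ (l + 2))
      ≤ ∑ l ∈ Finset.range (L + 1),
          ((2 : ℝ) ^ l * A + 2 ^ l * ((L : ℝ) - l) + 2 ^ (l + 2)) :=
        Finset.sum_le_sum key
    _ = (2 ^ (L + 1) - 1) * A + (2 ^ (L + 1) - L - 2) + 4 * (2 ^ (L + 1) - 1) := by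
        have hg : ∑ l ∈ Finset.range (L + 1), (2 : ℝ) ^ l = 2 ^ (L + 1) - 1 := by
          rw [geom_sum_eq (by norm_num)]
          norm_num
        have h4 : ∑ l ∈ Finset.range (L + 1), (2 : ℝ) ^ (l + 2)
            = 4 * (2 ^ (L + 1) - 1) := by
          have : ∀ l, (2 : ℝ) ^ (l + 2) = 4 * 2 ^ l := by
            intro l; rw [pow_add]; ring
          simp_rw [this]
          rw [← Finset.mul_sum, hg]
        rw [Finset.sum_add_distrib, Finset.sum_add_distrib, ← Finset.sum_mul, hg,
          aux_sum_lin, h4]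
    _ ≤ 4 * r * A + 20 * r := by
        have h1 : (2 : ℝ) ^ (L + 1) ≤ 4 * r := by
          rw [pow_succ]
          nlinarith
        have h2 : (2 ^ (L + 1) - 1 : ℝ) * A ≤ 4 * r * A := by
          apply mul_le_mul_of_nonneg_right _ hA
          linarith
        have hLnn : (0 : ℝ) ≤ (L : ℝ) := Nat.cast_nonneg L
        nlinarith
end
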